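/- Let X_n be random variables bounded below by 0, and suppose E[X_n] → γ̃ and for each n and ε > 0 define φ_n(ε) = P(X_n < γ̃ − ε) + ε. If X_n ≤ C almost surely and for n large E[X_n] ≥ γ̃ − ε, then P(X_n > γ̃ + √φ_n(ε)) ≤ 2ε·φ_n(ε)^{−1/2} + γ̃·φ_n(ε)^{1/2}. -/

import Mathlib

open MeasureTheory Filter

/-- Let `X` be a random variable with `0 ≤ X ≤ C` a.s., `γ̃ > 0`, `ε > 0`,
`φ = P(X < γ̃ - ε) + ε ≤ 1`, and `γ̃ - ε ≤ E[X] ≤ γ̃ + ε`.  Then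
`P(X > γ̃ + √φ) ≤ 2ε·φ^{-1/2} + γ̃·φ^{1/2}`. -/
theorem upper_tail_bound_from_expectation
    {Ω : Type*} [MeasurableSpace Ω] (μ : Measure Ω) [IsProbabilityMeasure μ]
    (X : Ω → ℝ) (hmeas : Measurable X) (hint : Integrable X μ)
    (C : ℝ) (hC : 0 < C) (hbd : ∀ᵐ ω ∂μ, 0 ≤ X ω ∧ X ω ≤ C)
    (γ ε φ : ℝ) (hγ : 0 < γ) (hε : 0 < ε)
    (hφ : φ = (μ {ω | X ω < γ - ε}).toReal + ε) (hφ1 : φ ≤ 1)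
    (hE1 : γ - ε ≤ ∫ ω, X ω ∂μ) (hE2 : (∫ ω, X ω ∂μ) ≤ γ + ε) :
    (μ {ω | γ + Real.sqrt φ < X ω}).toReal ≤
      2 * ε / Real.sqrt φ + γ * Real.sqrt φ := by
  set s := Real.sqrt φ with hs
  set A : Set Ω := {ω | γ + s < X ω} with hA
  set B : Set Ω := {ω | γ - ε ≤ X ω ∧ X ω ≤ γ + s} with hB
  set Cs : Set Ω := {ω | X ω < γ - ε} with hCs
  have hq0 : 0 ≤ (μ Cs).toReal := ENNReal.toReal_nonneg
  have hφpos : 0 < φ := by rw [hφ]; positivity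
  have hspos : 0 < s := Real.sqrt_pos.mpr hφpos
  have hss : s * s = φ := Real.mul_self_sqrt hφpos.le
  have hAm : MeasurableSet A := measurableSet_lt measurable_const hmeas
  have hBm : MeasurableSet B :=
    (measurableSet_le measurable_const hmeas).inter (measurableSet_le hmeas measurable_const)
  have hCm : MeasurableSet Cs := measurableSet_lt hmeas measurable_const
  -- the three sets partition Ω
  have hdAB : Disjoint A B := by
    rw [Set.disjoint_left]
    rintro ω hωA ⟨_, h2⟩
    exact absurd hωA (not_lt.mpr h2)
  have hdAC : Disjoint A Cs := by
    rw [Set.disjoint_left]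
    intro ω hωA hωC
    simp only [hA, hCs, Set.mem_setOf_eq] at hωA hωC
    nlinarith
  have hdBC : Disjoint B Cs := by
    rw [Set.disjoint_left]
    rintro ω ⟨h1, _⟩ hωC
    exact absurd hωC (not_lt.mpr h1)
  have huniv : A ∪ B ∪ Cs = Set.univ := by
    ext ω
    simp only [hA, hB, hCs, Set.mem_union, Set.mem_setOf_eq, Set.mem_univ, iff_true]
    by_cases h1 : X ω < γ - ε
    · exact Or.inr h1
    · by_cases h2 : X ω ≤ γ + s
      · exact Or.inl (Or.inr ⟨not_lt.mp h1, h2⟩)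
      · exact Or.inl (Or.inl (not_le.mp h2))
  have hsum : (μ A).toReal + (μ B).toReal + (μ Cs).toReal = 1 := by
    have h1 : μ (A ∪ B ∪ Cs) = 1 := by rw [huniv]; simp
    rw [measure_union (hdAC.union_left hdBC) hCm, measure_union hdAB hBm] at h1
    have := congrArg ENNReal.toReal h1
    rwa [ENNReal.toReal_add (by rw [ENNReal.add_ne_top]; exact ⟨measure_ne_top _ _, measure_ne_top _ _⟩) (measure_ne_top _ _),
      ENNReal.toReal_add (measure_ne_top _ _) (measure_ne_top _ _), ENNReal.toReal_one] at this
  -- lower bound the integral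
  have hf : Integrable (fun ω => A.indicator (fun _ => γ + s) ω + B.indicator (fun _ => γ - ε) ω) μ := by
    exact ((integrable_const _).indicator hAm).add ((integrable_const _).indicator hBm)
  have hle : (γ + s) * (μ A).toReal + (γ - ε) * (μ B).toReal ≤ ∫ ω, X ω ∂μ := by
    have h1 : ∫ ω, (A.indicator (fun _ => γ + s) ω + B.indicator (fun _ => γ - ε) ω) ∂μ
        = (γ + s) * (μ A).toReal + (γ - ε) * (μ B).toReal := by
      rw [integral_add ((integrable_const _).indicator hAm) ((integrable_const _).indicator hBm),
        integral_indicator_const _ hAm, integral_indicator_const _ hBm]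
      simp [smul_eq_mul]
      simp only [measureReal_def]; ring
    rw [← h1]
    refine integral_mono_ae hf hint ?_
    filter_upwards [hbd] with ω ⟨h0, _⟩
    by_cases hωA : ω ∈ A
    · have hωB : ω ∉ B := fun h => hdAB.le_bot ⟨hωA, h⟩ |>.elim
      simp only [Set.indicator_of_mem hωA, Set.indicator_of_notMem hωB, add_zero]
      exact (hωA : γ + s < X ω).le
    · by_cases hωB : ω ∈ B
      · simp only [Set.indicator_of_notMem hωA, Set.indicator_of_mem hωB, zero_add]
        exact hωB.1
      · simp only [Set.indicator_of_notMem hωA, Set.indicator_of_notMem hωB, add_zero]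
        exact h0
  -- algebra
  set p := (μ A).toReal with hp
  set q := (μ Cs).toReal with hqd
  have hp0 : 0 ≤ p := ENNReal.toReal_nonneg
  have hmB : (μ B).toReal = 1 - p - q := by linarith
  have hqφ : q = φ - ε := by rw [hφ]; ring
  have hkey : (γ + s) * p + (γ - ε) * (1 - p - q) ≤ γ + ε := by
    rw [← hmB]; linarith
  -- p * (s + ε) ≤ 2ε + (γ - ε) q ≤ 2ε + γ q
  have h2 : p * (s + ε) ≤ 2 * ε + γ * q := by nlinarith
  have h3 : p * s ≤ 2 * ε + γ * q := by nlinarith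
  have hqs : q ≤ s * s := by rw [hss]; linarith
  have : p ≤ (2 * ε + γ * q) / s := (le_div_iff₀ hspos).mpr h3
  calc p ≤ (2 * ε + γ * q) / s := this
    _ ≤ (2 * ε + γ * (s * s)) / s := by
        gcongr

    _ = 2 * ε / s + γ * s := by field_simp
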